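/- Let p ≥ 1 be an integer, M_p > 0, c > 0, let q be a real with 2 ≤ q ≤ p+1 and σ_q > 0. Let f : ℝ^n → ℝ be differentiable and uniformly convex of degree q with parameter σ_q, with global minimizer x*, let z ∈ ℝ^n and Δ > 0 satisfy f(z) − f(x*) ≤ Δ, and let N be a positive integer with N ≥ (2 c M_p q^{(p+1)/q} σ_q^{−(p+1)/q} Δ^{(p+1−q)/q})^{2/(3p+1)}. If y ∈ ℝ^n satisfies f(y) − f(x*) ≤ c M_p ∥z − x*∥^{p+1} / N^{(3p+1)/2}, then f(y) − f(x*) ≤ Δ/2. -/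

import Mathlib

open scoped RealInnerProductSpace

/-- `f` is uniformly convex of degree `q` with parameter `σ`:
`f(y) ≥ f(x) + ⟨∇f(x), y - x⟩ + (σ/q)‖y - x‖^q` for all `x, y`. -/
def UniformlyConvexDeg {n : ℕ} (q σ : ℝ) (f : EuclideanSpace ℝ (Fin n) → ℝ) : Prop :=
  ∀ x y : EuclideanSpace ℝ (Fin n),
    f y ≥ f x + ⟪gradient f x, y - x⟫ + (σ / q) * ‖y - x‖ ^ q

/-- Single-restart halving step in the proof of Theorem 3: if `f(z) - f(x_*) ≤ Δ`,
`N ≥ (2 c M_p q^{(p+1)/q} σ_q^{-(p+1)/q} Δ^{(p+1-q)/q})^{2/(3p+1)}` and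
`f(y) - f(x_*) ≤ c M_p ‖z - x_*‖^{p+1}/N^{(3p+1)/2}`, then `f(y) - f(x_*) ≤ Δ/2`. -/
theorem restart_halving_step {n : ℕ} (p : ℕ) (hp : 1 ≤ p) (Mp c : ℝ)
    (hMp : 0 < Mp) (hc : 0 < c)
    (q σq : ℝ) (hq2 : 2 ≤ q) (hqp : q ≤ (p : ℝ) + 1) (hσ : 0 < σq)
    (f : EuclideanSpace ℝ (Fin n) → ℝ) (hdiff : Differentiable ℝ f)
    (hucon : UniformlyConvexDeg q σq f)
    (xstar : EuclideanSpace ℝ (Fin n)) (hmin : ∀ w, f xstar ≤ f w)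
    (z : EuclideanSpace ℝ (Fin n)) (Δ : ℝ) (hΔ : 0 < Δ) (hz : f z - f xstar ≤ Δ)
    (N : ℕ) (hNpos : 0 < N)
    (hN : (N : ℝ) ≥ (2 * c * Mp * q ^ (((p : ℝ) + 1) / q) * σq ^ (-(((p : ℝ) + 1) / q))
        * Δ ^ (((p : ℝ) + 1 - q) / q)) ^ (2 / (3 * (p : ℝ) + 1)))
    (y : EuclideanSpace ℝ (Fin n))
    (hy : f y - f xstar ≤ c * Mp * ‖z - xstar‖ ^ (p + 1) / (N : ℝ) ^ ((3 * (p : ℝ) + 1) / 2)) :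
    f y - f xstar ≤ Δ / 2 := by
  have hq0 : (0:ℝ) < q := by linarith
  set α : ℝ := ((p : ℝ) + 1) / q with hα
  have hα0 : 0 < α := by positivity
  -- gradient at the minimizer is zero
  have hfd : fderiv ℝ f xstar = 0 := by
    have hloc : IsLocalMin f xstar := Filter.Eventually.of_forall hmin
    exact hloc.fderiv_eq_zero
  have hgrad : gradient f xstar = 0 := by
    rw [gradient, hfd]; simp
  set r : ℝ := ‖z - xstar‖ with hr
  have hr0 : 0 ≤ r := norm_nonneg _
  -- uniform convexity bound on r^q
  have huc := hucon xstar z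
  rw [hgrad] at huc
  simp only [inner_zero_left] at huc
  rw [← hr] at huc
  have hrq : r ^ q ≤ q * Δ / σq := by
    have h1 : (σq / q) * r ^ q ≤ Δ := by nlinarith [huc, hz]
    rw [le_div_iff₀ hσ]
    have h2 := mul_le_mul_of_nonneg_left h1 hq0.le
    calc r ^ q * σq = q * ((σq / q) * r ^ q) := by field_simp
    _ ≤ q * Δ := h2
  have hrq0 : (0:ℝ) ≤ r ^ q := Real.rpow_nonneg hr0 q
  have hB0 : (0:ℝ) < q * Δ / σq := by positivity
  -- r^(p+1) ≤ (qΔ/σq)^α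
  have hrp : r ^ (p + 1 : ℕ) ≤ (q * Δ / σq) ^ α := by
    have h1 : r ^ (p + 1 : ℕ) = (r ^ q) ^ α := by
      rw [← Real.rpow_natCast r (p+1), ← Real.rpow_mul hr0]
      congr 1
      rw [hα]
      field_simp
      norm_num
    rw [h1]
    exact Real.rpow_le_rpow hrq0 hrq (le_of_lt hα0)
  -- N^((3p+1)/2) ≥ A
  set A : ℝ := 2 * c * Mp * q ^ α * σq ^ (-α) * Δ ^ (((p : ℝ) + 1 - q) / q) with hA
  have hA0 : 0 < A := by
    have := Real.rpow_pos_of_pos hq0 α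
    have := Real.rpow_pos_of_pos hσ (-α)
    have := Real.rpow_pos_of_pos hΔ (((p : ℝ) + 1 - q) / q)
    positivity
  have h3p : (0:ℝ) < 3 * (p : ℝ) + 1 := by positivity
  have hNs : A ≤ (N : ℝ) ^ ((3 * (p : ℝ) + 1) / 2) := by
    have h1 : (A ^ (2 / (3 * (p : ℝ) + 1))) ^ ((3 * (p : ℝ) + 1) / 2) = A := by
      rw [← Real.rpow_mul (le_of_lt hA0)]
      rw [div_mul_div_comm]
      rw [mul_comm (2:ℝ)]
      rw [div_self (by positivity)]
      exact Real.rpow_one A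
    calc A = (A ^ (2 / (3 * (p : ℝ) + 1))) ^ ((3 * (p : ℝ) + 1) / 2) := h1.symm
    _ ≤ (N : ℝ) ^ ((3 * (p : ℝ) + 1) / 2) :=
        Real.rpow_le_rpow (Real.rpow_nonneg (le_of_lt hA0) _) hN (by positivity)
  have hNs0 : (0:ℝ) < (N : ℝ) ^ ((3 * (p : ℝ) + 1) / 2) :=
    lt_of_lt_of_le hA0 hNs
  -- key identity: c * Mp * (qΔ/σq)^α = A * Δ / 2
  have hΔsplit : Δ ^ α = Δ ^ (((p : ℝ) + 1 - q) / q) * Δ := by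
    nth_rewrite 3 [← Real.rpow_one Δ]
    rw [← Real.rpow_add hΔ, hα]
    congr 1
    field_simp
    ring
  have hσα : σq ^ α ≠ 0 := (Real.rpow_pos_of_pos hσ α).ne'
  have hkey : c * Mp * (q * Δ / σq) ^ α = A * Δ / 2 := by
    rw [hA, Real.div_rpow (by positivity) hσ.le, Real.mul_rpow hq0.le hΔ.le, hΔsplit,
        Real.rpow_neg hσ.le α]
    field_simp
  -- conclude
  calc f y - f xstar ≤ c * Mp * r ^ (p + 1) / (N : ℝ) ^ ((3 * (p : ℝ) + 1) / 2) := hy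
    _ ≤ c * Mp * (q * Δ / σq) ^ α / A := by
        apply div_le_div₀ (by positivity)
        · exact mul_le_mul_of_nonneg_left hrp (by positivity)
        · exact hA0
        · exact hNs
    _ = Δ / 2 := by rw [hkey]; field_simp
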